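/- Let n ≥ 2, d ≥ 2 and m = Nat.choose (n + d − 1) (d − 1). Let W be the span in EuclideanSpace ℂ (Fin n → Fin d) of all generalized Dicke states {D_n^{k} : k : Fin d → ℕ, ∑ a, k a = n}. Then the n-qudit space decomposes as the orthogonal direct sum of: (i) the span of the d coordinate basis vectors e_{(a,…,a)} for a : Fin d; (ii) the span of the generalized Dicke states with k a < n for all a, which has finrank m − d and all of whose nonzero vectors are GME; and (iii) the orthogonal complement Wᗮ, which has finrank d^n − m and contains no nonzero fully product vector. -/

import Mathlib

/-- The unnormalized generalized Dicke state of `n` qudits with excitation vector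
`k : Fin d → ℕ`. -/
noncomputable def genDicke (n d : ℕ) (k : Fin d → ℕ) :
    EuclideanSpace ℂ (Fin n → Fin d) :=
  WithLp.toLp 2 fun i => if ∀ a : Fin d, (Finset.univ.filter fun j => i j = a).card = k a then 1 else 0

/-- A vector of the `n`-qudit space is *fully product* if it is a simple tensor. -/
def FullyProduct {n d : ℕ} (ψ : EuclideanSpace ℂ (Fin n → Fin d)) : Prop :=
  ∃ φ : Fin n → Fin d → ℂ, ∀ i, ψ i = ∏ j, φ j (i j)

/-- `ψ` is biseparable across the bipartition `(S, Sᶜ)` of the `n` qudits. -/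
def Biseparable {n d : ℕ} (S : Set (Fin n))
    (ψ : EuclideanSpace ℂ (Fin n → Fin d)) : Prop :=
  ∃ (φ : ((j : S) → Fin d) → ℂ) (χ : ((j : ↥Sᶜ) → Fin d) → ℂ),
    ∀ i, ψ i = φ (fun j => i j.val) * χ (fun j => i j.val)

/-- A nonzero vector is genuinely multipartite entangled if it is not biseparable
across any nontrivial bipartition. -/
def GME {n d : ℕ} (ψ : EuclideanSpace ℂ (Fin n → Fin d)) : Prop :=
  ψ ≠ 0 ∧ ∀ S : Set (Fin n), S ≠ ∅ → S ≠ Set.univ → ¬ Biseparable S ψ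

namespace NQV
open Finset

variable {n d : ℕ}


def cnt (i : Fin n → Fin d) (a : Fin d) : ℕ := (Finset.univ.filter fun j => i j = a).card

lemma genDicke_apply (k : Fin d → ℕ) (i : Fin n → Fin d) :
    genDicke n d k i = if (∀ a, cnt i a = k a) then 1 else 0 := rfl

lemma cnt_sum (i : Fin n → Fin d) : ∑ a, cnt i a = n := by
  classical
  have := Finset.card_eq_sum_card_fiberwise
    (f := i) (s := Finset.univ) (t := Finset.univ) (fun x _ => Finset.mem_univ _)
  simpa [cnt] using this.symm

lemma exists_cnt : ∀ (n : ℕ) (k : Fin d → ℕ), (∑ a, k a) = n →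
    ∃ i : Fin n → Fin d, ∀ a, cnt i a = k a := by
  intro n
  induction n with
  | zero =>
    intro k hk
    refine ⟨Fin.elim0, fun a => ?_⟩
    have : k a = 0 := by
      have := Finset.sum_eq_zero_iff.mp hk
      exact this a (mem_univ a)
    simp [cnt, this]
  | succ n ih =>
    intro k hk
    have : ∃ a₀, k a₀ ≠ 0 := by
      by_contra h
      push_neg at h
      simp [h] at hk
    obtain ⟨a₀, ha₀⟩ := this
    set k' : Fin d → ℕ := Function.update k a₀ (k a₀ - 1) with hk'
    have hsum : ∑ a, k' a = n := by
      have h1 : ∑ a, k' a = (k a₀ - 1) + ∑ x ∈ univ \ {a₀}, k x := by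
        rw [hk', Finset.sum_update_of_mem (mem_univ a₀)]
      have h2 : ∑ a, k a = k a₀ + ∑ x ∈ univ \ {a₀}, k x := by
        rw [← Finset.erase_eq, Finset.add_sum_erase _ _ (mem_univ a₀)]
      omega
    obtain ⟨i', hi'⟩ := ih k' hsum
    refine ⟨Fin.cons a₀ i', fun a => ?_⟩
    have hc : cnt (Fin.cons a₀ i' : Fin (n+1) → Fin d) a
        = (if a₀ = a then 1 else 0) + cnt i' a := by
      rw [cnt, Finset.card_filter, Fin.sum_univ_succ]
      simp only [Fin.cons_zero, Fin.cons_succ, cnt, Finset.card_filter]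
    rw [hc]
    rcases eq_or_ne a a₀ with rfl | hne
    · have := hi' a
      rw [hk', Function.update_self] at this
      rw [if_pos rfl]
      omega
    · have := hi' a
      simp [hk', Function.update_of_ne hne] at this
      simp [this, Ne.symm hne]


/-- evaluation at a point, as a linear map -/
def evL (i : Fin n → Fin d) : EuclideanSpace ℂ (Fin n → Fin d) →ₗ[ℂ] ℂ where
  toFun ψ := ψ i
  map_add' _ _ := rfl
  map_smul' _ _ := rfl

lemma dicke_li (F : Finset (Fin d → ℕ)) (hF : ∀ k ∈ F, ∑ a, k a = n) :
    LinearIndependent ℂ (fun k : ↥F => genDicke n d (k : Fin d → ℕ)) := by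
  classical
  rw [Fintype.linearIndependent_iff]
  intro g hg k₀
  obtain ⟨i, hi⟩ := exists_cnt n (k₀ : Fin d → ℕ) (hF _ k₀.2)
  have h0 : evL i (∑ k : ↥F, g k • genDicke n d (k : Fin d → ℕ)) = 0 := by rw [hg]; rfl
  rw [map_sum] at h0
  have hterm : ∀ k : ↥F, evL i (g k • genDicke n d (k : Fin d → ℕ))
      = if k = k₀ then g k else 0 := by
    intro k
    have : evL i (g k • genDicke n d (k : Fin d → ℕ))
        = g k * genDicke n d (k : Fin d → ℕ) i := rfl
    rw [this, genDicke_apply]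
    rcases eq_or_ne k k₀ with rfl | hne
    · rw [if_pos hi, if_pos rfl, mul_one]
    · rw [if_neg, if_neg hne, mul_zero]
      intro hall
      apply hne
      apply Subtype.ext
      funext a
      rw [← hall a, hi a]
  rw [Finset.sum_congr rfl (fun k _ => hterm k)] at h0
  simpa using h0

lemma finrank_span_dicke (F : Finset (Fin d → ℕ)) (hF : ∀ k ∈ F, ∑ a, k a = n) :
    Module.finrank ℂ ↥(Submodule.span ℂ
      (Set.range (fun k : ↥F => genDicke n d (k : Fin d → ℕ)))) = F.card := by
  rw [finrank_span_eq_card (dicke_li F hF), Fintype.card_coe]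

noncomputable def FW (n d : ℕ) : Finset (Fin d → ℕ) := Finset.Nat.antidiagonalTuple d n
noncomputable def FB (n d : ℕ) : Finset (Fin d → ℕ) := (FW n d).filter (fun k => ∀ a, k a < n)

lemma mem_FW {k : Fin d → ℕ} : k ∈ FW n d ↔ ∑ a, k a = n := Finset.Nat.mem_antidiagonalTuple

lemma mem_FB {k : Fin d → ℕ} : k ∈ FB n d ↔ (∑ a, k a = n ∧ ∀ a, k a < n) := by
  rw [FB, Finset.mem_filter, mem_FW]

lemma card_FW (hd : 1 ≤ d) : (FW n d).card = (n + d - 1).choose (d - 1) := by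
  classical
  rw [← Fintype.card_coe]
  have e1 : ↥(FW n d) ≃ {k : Fin d → ℕ // ∑ a, k a = n} :=
    Equiv.subtypeEquivRight (fun k => mem_FW)
  have e2 : {k : Fin d → ℕ // ∑ a, k a = n} ≃ {f : Fin d →₀ ℕ // ∑ a, f a = n} :=
    Equiv.subtypeEquiv Finsupp.equivFunOnFinite.symm (fun k => by
      simp [Finsupp.equivFunOnFinite])
  have e3 : {f : Fin d →₀ ℕ // ∑ a, f a = n} ≃ Sym (Fin d) n :=
    Equiv.subtypeEquiv Multiset.toFinsupp.symm.toEquiv (fun f => by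
      have hcard : Multiset.card (Multiset.toFinsupp.symm f) = ∑ i : Fin d, f i := by
        have h0 := Multiset.toFinsupp_sum_eq (Multiset.toFinsupp.symm f)
        rw [AddEquiv.apply_symm_apply, Finsupp.sum_fintype] at h0
        · simpa using h0.symm
        · intro _; rfl
      constructor
      · intro h
        show Multiset.card (Multiset.toFinsupp.symm f) = n
        rw [hcard]; exact h
      · intro h
        have h' : Multiset.card (Multiset.toFinsupp.symm f) = n := h
        rw [hcard] at h'; exact h')
  rw [Fintype.card_congr (e1.trans (e2.trans e3))]
  rw [Sym.card_sym_eq_choose, Fintype.card_fin]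
  have h1 : n + d - 1 = n + (d - 1) := by omega
  have h2 : d + n - 1 = n + (d - 1) := by omega
  rw [h1, h2]
  have := Nat.choose_symm (n := n + (d - 1)) (k := n) (by omega)
  have h3 : n + (d - 1) - n = d - 1 := by omega
  rw [h3] at this
  exact this.symm

lemma filter_not_lt (hn : 1 ≤ n) :
    (FW n d).filter (fun k => ¬ ∀ a, k a < n)
      = Finset.image (fun a : Fin d => fun b => if b = a then n else 0) Finset.univ := by
  classical
  ext k
  simp only [Finset.mem_filter, Finset.mem_image, Finset.mem_univ, true_and, mem_FW]
  constructor
  · rintro ⟨hsum, hex⟩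
    push_neg at hex
    obtain ⟨a, ha⟩ := hex
    have hle : k a ≤ n := by
      rw [← hsum]
      exact Finset.single_le_sum (fun b _ => Nat.zero_le _) (mem_univ a)
    have hka : k a = n := le_antisymm hle ha
    refine ⟨a, ?_⟩
    funext b
    rcases eq_or_ne b a with rfl | hne
    · simp [hka]
    · have hz : ∑ x ∈ univ.erase a, k x = 0 := by
        have := Finset.add_sum_erase univ k (mem_univ a)
        omega
      have := Finset.sum_eq_zero_iff.mp hz b (Finset.mem_erase.mpr ⟨hne, mem_univ b⟩)
      simp [hne, this]
  · rintro ⟨a, rfl⟩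
    constructor
    · simp [Finset.sum_ite_eq']
    · intro hall
      have := hall a
      simp at this

lemma card_FB (hn : 1 ≤ n) (hd : 1 ≤ d) : (FB n d).card = (FW n d).card - d := by
  classical
  have hinj : Function.Injective (fun a : Fin d => (fun b => if b = a then n else 0 : Fin d → ℕ)) := by
    intro a a' h
    by_contra hne
    have h2 := congrFun h a
    simp [hne] at h2
    omega
  have himg : ((FW n d).filter (fun k => ¬ ∀ a, k a < n)).card = d := by
    rw [filter_not_lt hn, Finset.card_image_of_injective _ hinj, Finset.card_univ,
      Fintype.card_fin]
  have hsplit := Finset.card_filter_add_card_filter_not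
    (s := FW n d) (p := fun k => ∀ a, k a < n)
  rw [himg] at hsplit
  rw [FB]
  exact Nat.eq_sub_of_add_eq hsplit

noncomputable def cnt' (i : Fin n → Fin d) : Fin d →₀ ℕ := ∑ j, Finsupp.single (i j) 1

lemma cnt'_apply (i : Fin n → Fin d) (a : Fin d) : cnt' i a = cnt i a := by
  classical
  rw [cnt', Finset.sum_apply']
  rw [cnt, Finset.card_filter]
  congr 1
  funext j
  rw [Finsupp.single_apply]

lemma prod_X {ι : Type*} (s : Finset ι) (f : ι → Fin d) :
    ∏ j ∈ s, (MvPolynomial.X (f j) : MvPolynomial (Fin d) ℂ)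
      = MvPolynomial.monomial (∑ j ∈ s, Finsupp.single (f j) 1) 1 := by
  classical
  induction s using Finset.induction_on with
  | empty => simp [MvPolynomial.monomial_zero']
  | insert _ _ hne ih =>
    rw [Finset.prod_insert hne, Finset.sum_insert hne, ih,
      MvPolynomial.X, MvPolynomial.monomial_mul, mul_one]

lemma inner_dicke (k : Fin d → ℕ) (ψ : EuclideanSpace ℂ (Fin n → Fin d)) :
    (inner ℂ (genDicke n d k) ψ : ℂ)
      = ∑ i ∈ Finset.univ.filter (fun i => ∀ a, cnt i a = k a), ψ i := by
  classical
  rw [PiLp.inner_apply, Finset.sum_filter]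
  congr 1
  funext i
  rw [genDicke_apply]
  rcases em (∀ a, cnt i a = k a) with h | h
  · simp [h]
  · simp [h]

lemma product_orth_zero (ψ : EuclideanSpace ℂ (Fin n → Fin d))
    (horth : ∀ k : Fin d → ℕ, (∑ a, k a) = n →
      ∑ i ∈ Finset.univ.filter (fun i => ∀ a, cnt i a = k a), ψ i = 0)
    (hp : FullyProduct ψ) : ψ = 0 := by
  classical
  obtain ⟨φ, hφ⟩ := hp
  set L : Fin n → MvPolynomial (Fin d) ℂ :=
    fun j => ∑ a, MvPolynomial.C (φ j a) * MvPolynomial.X a with hL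
  have hprod : ∏ j, L j
      = ∑ i : Fin n → Fin d, MvPolynomial.monomial (cnt' i) (∏ j, φ j (i j)) := by
    rw [hL]
    rw [Finset.prod_univ_sum]
    rw [Fintype.piFinset_univ]
    apply Finset.sum_congr rfl
    intro i _
    rw [Finset.prod_mul_distrib, ← map_prod, prod_X, MvPolynomial.C_mul_monomial, mul_one]
    rfl
  have hzero : ∏ j, L j = 0 := by
    rw [hprod]
    rw [← Finset.sum_fiberwise_of_maps_to (g := cnt')
      (t := Finset.univ.image cnt') (fun x _ => Finset.mem_image_of_mem _ (Finset.mem_univ _))]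
    apply Finset.sum_eq_zero
    intro μ hμ
    rw [Finset.sum_congr rfl (fun i hi => by
      rw [(Finset.mem_filter.mp hi).2] : ∀ i ∈ _,
        MvPolynomial.monomial (cnt' i) (∏ j, φ j (i j))
          = MvPolynomial.monomial μ (∏ j, φ j (i j)))]
    rw [← map_sum]
    obtain ⟨i₀, -, hi₀⟩ := Finset.mem_image.mp hμ
    have hs : ∑ a, μ a = n := by
      rw [← hi₀]
      simp only [cnt'_apply]
      exact cnt_sum i₀
    have hfilt : (Finset.univ.filter fun i : Fin n → Fin d => cnt' i = μ)
        = Finset.univ.filter (fun i => ∀ a, cnt i a = (fun a => μ a) a) := by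
      apply Finset.filter_congr
      intro i _
      constructor
      · intro h a; rw [← cnt'_apply, h]
      · intro h; ext a; rw [cnt'_apply, h a]
    have h0 := horth (fun a => μ a) hs
    rw [hfilt]
    rw [Finset.sum_congr rfl (fun i _ => (hφ i).symm), h0, map_zero]
  have hex : ∃ j ∈ Finset.univ, L j = 0 := Finset.prod_eq_zero_iff.mp hzero
  obtain ⟨j, -, hLj⟩ := hex
  have hφj : ∀ a, φ j a = 0 := by
    intro a
    have := congrArg (MvPolynomial.eval (fun b => if b = a then (1:ℂ) else 0)) hLj
    rw [hL] at this
    simp only [map_sum, map_mul, MvPolynomial.eval_C, MvPolynomial.eval_X, map_zero,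
      mul_ite, mul_one, mul_zero] at this
    rw [Finset.sum_ite_eq' Finset.univ a (fun b => φ j b)] at this
    simpa using this
  ext i
  rw [hφ i]
  exact Finset.prod_eq_zero (Finset.mem_univ j) (hφj (i j))

lemma cnt_perm (i : Fin n → Fin d) (σ : Equiv.Perm (Fin n)) (a : Fin d) :
    cnt (fun j => i (σ j)) a = cnt i a := by
  classical
  exact Finset.card_equiv σ (fun j => by simp)

open Classical in
noncomputable def Mix (S : Set (Fin n)) (x y : Fin n → Fin d) : Fin n → Fin d :=
  fun j => if j ∈ S then x j else y j

lemma mix_mem {S : Set (Fin n)} {x y : Fin n → Fin d} {j : Fin n} (h : j ∈ S) :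
    Mix S x y j = x j := by simp [Mix, h]

lemma mix_not_mem {S : Set (Fin n)} {x y : Fin n → Fin d} {j : Fin n} (h : j ∉ S) :
    Mix S x y j = y j := by simp [Mix, h]

lemma bisep_mul {S : Set (Fin n)} {ψ : EuclideanSpace ℂ (Fin n → Fin d)}
    (h : Biseparable S ψ) (x y : Fin n → Fin d) :
    ψ (Mix S x y) * ψ (Mix S y x) = ψ x * ψ y := by
  obtain ⟨φ, χ, hφχ⟩ := h
  rw [hφχ x, hφχ y, hφχ (Mix S x y), hφχ (Mix S y x)]
  have h1 : (fun j : ↥S => Mix S x y j.val) = fun j : ↥S => x j.val :=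
    funext fun j => mix_mem j.2
  have h2 : (fun j : ↥Sᶜ => Mix S x y j.val) = fun j : ↥Sᶜ => y j.val :=
    funext fun j => mix_not_mem j.2
  have h3 : (fun j : ↥S => Mix S y x j.val) = fun j : ↥S => y j.val :=
    funext fun j => mix_mem j.2
  have h4 : (fun j : ↥Sᶜ => Mix S y x j.val) = fun j : ↥Sᶜ => x j.val :=
    funext fun j => mix_not_mem j.2
  rw [h1, h2, h3, h4]
  ring

lemma bisep_univ (ψ : EuclideanSpace ℂ (Fin n → Fin d)) :
    Biseparable Set.univ ψ :=
  ⟨fun g => ψ (fun j => g ⟨j, trivial⟩), fun _ => 1, fun i => by rw [mul_one]⟩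

lemma bisep_inter {ψ : EuclideanSpace ℂ (Fin n → Fin d)} {i₀ : Fin n → Fin d}
    (h0 : ψ i₀ ≠ 0) {S T : Set (Fin n)}
    (hS : Biseparable S ψ) (hT : Biseparable T ψ) : Biseparable (S ∩ T) ψ := by
  classical
  have key : ∀ i, ψ (Mix (S ∩ T) i i₀) * (ψ (Mix S i₀ i) * ψ (Mix (S \ T) i i₀))
      = ψ i * (ψ i₀ * ψ i₀) := by
    intro i
    have e1 : Mix T (Mix S i i₀) i₀ = Mix (S ∩ T) i i₀ := by
      funext j
      by_cases hT' : j ∈ T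
      · rw [mix_mem hT']
        by_cases hS' : j ∈ S
        · rw [mix_mem hS', mix_mem (Set.mem_inter hS' hT')]
        · rw [mix_not_mem hS', mix_not_mem (fun hh => hS' hh.1)]
      · rw [mix_not_mem hT', mix_not_mem (fun hh => hT' hh.2)]
    have e2 : Mix T i₀ (Mix S i i₀) = Mix (S \ T) i i₀ := by
      funext j
      by_cases hT' : j ∈ T
      · rw [mix_mem hT', mix_not_mem (fun hh => hh.2 hT')]
      · rw [mix_not_mem hT']
        by_cases hS' : j ∈ S
        · rw [mix_mem hS', mix_mem (Set.mem_diff_of_mem hS' hT')]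
        · rw [mix_not_mem hS', mix_not_mem (fun hh => hS' hh.1)]
    have hA := bisep_mul hS i i₀
    have hB := bisep_mul hT (Mix S i i₀) i₀
    rw [e1, e2] at hB
    linear_combination ψ (Mix S i₀ i) * hB + ψ i₀ * hA
  refine ⟨fun h => ψ (fun j => if hj : j ∈ S ∩ T then h ⟨j, hj⟩ else i₀ j)
      * ((ψ i₀ * ψ i₀)⁻¹),
    fun h => ψ (fun j => if hj : j ∈ (S ∩ T)ᶜ then (if j ∈ S then i₀ j else h ⟨j, hj⟩)
        else i₀ j)
      * ψ (fun j => if hj : j ∈ (S ∩ T)ᶜ then (if j ∈ S then h ⟨j, hj⟩ else i₀ j)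
        else i₀ j),
    fun i => ?_⟩
  have e0 : (fun j => if hj : j ∈ S ∩ T then
        (fun j' : ↥(S ∩ T) => i j'.val) ⟨j, hj⟩ else i₀ j) = Mix (S ∩ T) i i₀ := by
    funext j
    by_cases hj : j ∈ S ∩ T
    · rw [dif_pos hj, mix_mem hj]
    · rw [dif_neg hj, mix_not_mem hj]
  have e1 : (fun j => if hj : j ∈ (S ∩ T)ᶜ then
        (if j ∈ S then i₀ j else (fun j' : ↥(S ∩ T)ᶜ => i j'.val) ⟨j, hj⟩)
        else i₀ j) = Mix S i₀ i := by
    funext j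
    by_cases hj : j ∈ (S ∩ T)ᶜ
    · rw [dif_pos hj]
      by_cases hS' : j ∈ S
      · rw [if_pos hS', mix_mem hS']
      · rw [if_neg hS', mix_not_mem hS']
    · rw [dif_neg hj]
      have hj' : j ∈ S ∩ T := not_not.mp hj
      rw [mix_mem hj'.1]
  have e2 : (fun j => if hj : j ∈ (S ∩ T)ᶜ then
        (if j ∈ S then (fun j' : ↥(S ∩ T)ᶜ => i j'.val) ⟨j, hj⟩ else i₀ j)
        else i₀ j) = Mix (S \ T) i i₀ := by
    funext j
    by_cases hj : j ∈ (S ∩ T)ᶜ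
    · rw [dif_pos hj]
      by_cases hS' : j ∈ S
      · have hT' : j ∉ T := fun hh => hj ⟨hS', hh⟩
        rw [if_pos hS', mix_mem (Set.mem_diff_of_mem hS' hT')]
      · rw [if_neg hS', mix_not_mem (fun hh => hS' hh.1)]
    · rw [dif_neg hj]
      have hj' : j ∈ S ∩ T := not_not.mp hj
      rw [mix_not_mem (fun hh => hh.2 hj'.2)]
  simp only []
  rw [e0, e1, e2]
  have hk := key i
  have hne : ψ i₀ * ψ i₀ ≠ 0 := mul_ne_zero h0 h0
  field_simp
  linear_combination -hk


lemma bisep_perm {ψ : EuclideanSpace ℂ (Fin n → Fin d)}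
    (hsym : ∀ σ : Equiv.Perm (Fin n), ∀ i, ψ (fun j => i (σ j)) = ψ i)
    {S : Set (Fin n)} (h : Biseparable S ψ) (σ : Equiv.Perm (Fin n)) :
    Biseparable (σ '' S) ψ := by
  obtain ⟨φ, χ, hφχ⟩ := h
  have hpf : ∀ j : ↥Sᶜ, (σ j.val) ∈ (σ '' S)ᶜ := by
    rintro j ⟨s, hs, he⟩
    exact j.2 (by rwa [← σ.injective he])
  refine ⟨fun g => φ (fun j => g ⟨σ j.val, Set.mem_image_of_mem σ j.2⟩),
    fun g => χ (fun j => g ⟨σ j.val, hpf j⟩), fun i => ?_⟩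
  rw [← hsym σ i, hφχ (fun j => i (σ j))]

lemma bisep_biInter {ψ : EuclideanSpace ℂ (Fin n → Fin d)} {i₀ : Fin n → Fin d}
    (h0 : ψ i₀ ≠ 0) {ι : Type} [DecidableEq ι] (t : Finset ι) (Sf : ι → Set (Fin n))
    (h : ∀ l ∈ t, Biseparable (Sf l) ψ) : Biseparable (⋂ l ∈ t, Sf l) ψ := by
  classical
  induction t using Finset.induction_on with
  | empty =>
    have : (⋂ l ∈ (∅ : Finset ι), Sf l) = Set.univ := by simp
    rw [this]
    exact bisep_univ ψ
  | @insert a t ha ih =>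
    rw [Finset.set_biInter_insert]
    exact bisep_inter h0 (h a (Finset.mem_insert_self a t))
      (ih (fun l hl => h l (Finset.mem_insert_of_mem hl)))

lemma bisep_singleton {ψ : EuclideanSpace ℂ (Fin n → Fin d)}
    (hsym : ∀ σ : Equiv.Perm (Fin n), ∀ i, ψ (fun j => i (σ j)) = ψ i)
    {S : Set (Fin n)} (hS1 : S.Nonempty) (hS2 : Sᶜ.Nonempty)
    (hbs : Biseparable S ψ) {i₀ : Fin n → Fin d} (h0 : ψ i₀ ≠ 0) (j : Fin n) :
    Biseparable {j} ψ := by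
  classical
  obtain ⟨s₀, hs₀⟩ := hS1
  obtain ⟨t₀, ht₀⟩ := hS2
  have hst : t₀ ≠ s₀ := fun h => ht₀ (h ▸ hs₀)
  set σf : Fin n → Equiv.Perm (Fin n) :=
    fun l => (Equiv.swap s₀ j).trans (Equiv.swap ((Equiv.swap s₀ j) t₀) l) with hσf
  have ht' : (Equiv.swap s₀ j) t₀ ≠ j := by
    intro he
    have : (Equiv.swap s₀ j) t₀ = (Equiv.swap s₀ j) s₀ := by
      rw [he, Equiv.swap_apply_left]
    exact hst ((Equiv.swap s₀ j).injective this)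
  have hσj : ∀ l, l ≠ j → (σf l) s₀ = j := by
    intro l hl
    simp only [hσf, Equiv.trans_apply, Equiv.swap_apply_left]
    exact Equiv.swap_apply_of_ne_of_ne (Ne.symm ht') (Ne.symm hl)
  have hσl : ∀ l, (σf l) t₀ = l := by
    intro l
    simp only [hσf, Equiv.trans_apply, Equiv.swap_apply_left]
  have hbi : ∀ l ∈ Finset.univ.erase j, Biseparable ((σf l) '' S) ψ :=
    fun l _ => bisep_perm hsym hbs (σf l)
  have hbig := bisep_biInter h0 (Finset.univ.erase j) (fun l => (σf l) '' S) hbi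
  have heq : (⋂ l ∈ Finset.univ.erase j, (σf l) '' S) = {j} := by
    ext x
    simp only [Set.mem_iInter, Set.mem_singleton_iff, Finset.mem_erase,
      Finset.mem_univ, and_true]
    constructor
    · intro h
      by_contra hx
      obtain ⟨s, hs, he⟩ := h x hx
      have : s = t₀ := (σf x).injective (by rw [he, hσl])
      exact ht₀ (this ▸ hs)
    · intro hxj
      subst hxj
      intro l hl
      exact ⟨s₀, hs₀, hσj l hl⟩
  rw [heq] at hbig
  exact hbig

lemma fullyProduct_of_singletons (hn : 0 < n) {ψ : EuclideanSpace ℂ (Fin n → Fin d)}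
    (h : ∀ j, Biseparable {j} ψ) {i₀ : Fin n → Fin d} (h0 : ψ i₀ ≠ 0) :
    FullyProduct ψ := by
  classical
  have key : ∀ t : Finset (Fin n), ∀ i,
      ψ (Mix ↑t i i₀) * (ψ i₀) ^ t.card
        = ψ i₀ * ∏ s ∈ t, ψ (Function.update i₀ s (i s)) := by
    intro t
    induction t using Finset.induction_on with
    | empty =>
      intro i
      have hmix : Mix (↑(∅ : Finset (Fin n))) i i₀ = i₀ :=
        funext fun j => mix_not_mem (by simp)
      rw [hmix]
      simp
    | @insert a t ha ih =>
      intro i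
      have hswap := bisep_mul (h a) (Mix ↑(insert a t) i i₀) i₀
      have e1 : Mix {a} i₀ (Mix ↑(insert a t) i i₀) = Mix ↑t i i₀ := by
        funext j
        by_cases hj : j = a
        · subst hj; simp [Mix, ha]
        · simp [Mix, hj]
      have e2 : Mix {a} (Mix ↑(insert a t) i i₀) i₀ = Function.update i₀ a (i a) := by
        funext j
        by_cases hj : j = a
        · subst hj; simp [Mix]
        · simp [Mix, hj, Function.update_of_ne hj]
      rw [e1, e2] at hswap
      rw [Finset.card_insert_of_notMem ha, Finset.prod_insert ha, pow_succ]
      have hih := ih i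
      linear_combination ψ (Function.update i₀ a (i a)) * hih
        - (ψ i₀) ^ t.card * hswap
  have hmixu : ∀ i : Fin n → Fin d, Mix ↑(Finset.univ : Finset (Fin n)) i i₀ = i :=
    fun i => funext fun j => mix_mem (by simp)
  have hcard : (Finset.univ : Finset (Fin n)).card = n := by simp
  set j₀ : Fin n := ⟨0, hn⟩
  refine ⟨fun j x => (if j = j₀ then ψ i₀ * (ψ i₀ ^ n)⁻¹ else 1)
      * ψ (Function.update i₀ j x), fun i => ?_⟩
  have hk := key Finset.univ i
  rw [hmixu i, hcard] at hk
  rw [Finset.prod_mul_distrib,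
    Finset.prod_ite_eq' Finset.univ j₀ (fun _ => ψ i₀ * (ψ i₀ ^ n)⁻¹)]
  simp only [Finset.mem_univ, if_pos]
  have hpow : ψ i₀ ^ n ≠ 0 := pow_ne_zero _ h0
  field_simp
  linear_combination hk

lemma psi_ne_exists {ψ : EuclideanSpace ℂ (Fin n → Fin d)} (h : ψ ≠ 0) :
    ∃ i, ψ i ≠ 0 := by
  by_contra hc
  push_neg at hc
  exact h (PiLp.ext hc)

lemma not_bisep {ψ : EuclideanSpace ℂ (Fin n → Fin d)}
    (hsym : ∀ σ : Equiv.Perm (Fin n), ∀ i, ψ (fun j => i (σ j)) = ψ i)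
    (hvan : ∀ a : Fin d, ψ (fun _ => a) = 0) (hne : ψ ≠ 0)
    {S : Set (Fin n)} (hS1 : S ≠ ∅) (hS2 : S ≠ Set.univ) : ¬ Biseparable S ψ := by
  classical
  intro hbs
  obtain ⟨i₀, h0⟩ := psi_ne_exists hne
  have hS1' : S.Nonempty := Set.nonempty_iff_ne_empty.mpr hS1
  have hS2' : Sᶜ.Nonempty := Set.nonempty_compl.mpr hS2
  have hn : 0 < n := by
    obtain ⟨x, -⟩ := hS1'
    exact x.pos
  have hsingle : ∀ j, Biseparable {j} ψ :=
    fun j => bisep_singleton hsym hS1' hS2' hbs h0 j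
  obtain ⟨φ, hφ⟩ := fullyProduct_of_singletons hn hsingle h0
  have hc : ∀ j, φ j (i₀ j) ≠ 0 := by
    intro j hzero
    apply h0
    rw [hφ]
    exact Finset.prod_eq_zero (Finset.mem_univ j) hzero
  have hkey : ∀ (j l : Fin n), j ≠ l → ∀ x,
      φ j x * φ l (i₀ l) = φ j (i₀ l) * φ l x := by
    intro j l hjl x
    have hs := hsym (Equiv.swap j l) (Function.update i₀ j x)
    rw [hφ, hφ] at hs
    set P : ℂ := ∏ r ∈ (Finset.univ.erase j).erase l, φ r (i₀ r) with hP
    have hPne : P ≠ 0 := by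
      rw [hP]
      apply Finset.prod_ne_zero_iff.mpr
      intro r hr
      rcases Finset.mem_erase.mp hr with ⟨hrl, hrj⟩
      rcases Finset.mem_erase.mp hrj with ⟨hrj', -⟩
      exact hc r
    have hmem_l : l ∈ Finset.univ.erase j := Finset.mem_erase.mpr ⟨Ne.symm hjl, Finset.mem_univ l⟩
    have e1 : ∏ r, φ r (Function.update i₀ j x ((Equiv.swap j l) r))
        = φ j (i₀ l) * (φ l x * P) := by
      rw [← Finset.mul_prod_erase Finset.univ _ (Finset.mem_univ j),
        ← Finset.mul_prod_erase (Finset.univ.erase j) _ hmem_l]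
      congr 1
      · rw [Equiv.swap_apply_left, Function.update_of_ne (Ne.symm hjl)]
      congr 1
      · rw [Equiv.swap_apply_right, Function.update_self]
      rw [hP]
      apply Finset.prod_congr rfl
      intro r hr
      rcases Finset.mem_erase.mp hr with ⟨hrl, hrj⟩
      rcases Finset.mem_erase.mp hrj with ⟨hrj', -⟩
      rw [Equiv.swap_apply_of_ne_of_ne hrj' hrl, Function.update_of_ne hrj']
    have e2 : ∏ r, φ r (Function.update i₀ j x r)
        = φ j x * (φ l (i₀ l) * P) := by
      rw [← Finset.mul_prod_erase Finset.univ _ (Finset.mem_univ j),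
        ← Finset.mul_prod_erase (Finset.univ.erase j) _ hmem_l]
      congr 1
      · rw [Function.update_self]
      congr 1
      · rw [Function.update_of_ne (Ne.symm hjl)]
      rw [hP]
      apply Finset.prod_congr rfl
      intro r hr
      rcases Finset.mem_erase.mp hr with ⟨hrl, hrj⟩
      rcases Finset.mem_erase.mp hrj with ⟨hrj', -⟩
      rw [Function.update_of_ne hrj']
    rw [e1, e2] at hs
    have := mul_right_cancel₀ hPne (by linear_combination hs :
      (φ j (i₀ l) * φ l x) * P = (φ j x * φ l (i₀ l)) * P)
    linear_combination -this
  have hcross : ∀ j l, j ≠ l → φ j (i₀ l) ≠ 0 := by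
    intro j l hjl hz
    have hkk := hkey j l hjl (i₀ j)
    rw [hz, zero_mul] at hkk
    exact (mul_ne_zero (hc j) (hc l)) hkk
  set j₀ : Fin n := ⟨0, hn⟩
  have hzero : ∏ r, φ r (i₀ j₀) = 0 := by
    rw [← hφ (fun _ => i₀ j₀)]
    exact hvan (i₀ j₀)
  obtain ⟨j₁, -, hj₁⟩ := Finset.prod_eq_zero_iff.mp hzero
  rcases eq_or_ne j₁ j₀ with rfl | hne'
  · exact hc j₀ hj₁

  · exact hcross j₁ j₀ hne' hj₁


lemma cnt_const (a b : Fin d) : cnt (fun _ : Fin n => a) b = if b = a then n else 0 := by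
  classical
  rcases eq_or_ne b a with rfl | h
  · simp [cnt]
  · simp [cnt, h, Ne.symm h]

lemma dicke_cond_iff (a : Fin d) (i : Fin n → Fin d) :
    (∀ b, cnt i b = if b = a then n else 0) ↔ i = fun _ => a := by
  constructor
  · intro h
    funext j
    have ha := h a
    rw [if_pos rfl] at ha
    have huniv : (Finset.univ.filter fun j => i j = a) = Finset.univ := by
      apply Finset.eq_univ_of_card
      rw [Fintype.card_fin]
      exact ha
    have hj : j ∈ Finset.univ.filter fun j => i j = a := by
      rw [huniv]; exact Finset.mem_univ j
    exact (Finset.mem_filter.mp hj).2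
  · rintro rfl
    exact fun b => cnt_const a b

lemma dicke_single (a : Fin d) :
    EuclideanSpace.single (fun _ => a) (1 : ℂ)
      = genDicke n d (fun b => if b = a then n else 0) := by
  ext i
  rw [EuclideanSpace.single_apply, genDicke_apply]
  by_cases h : i = fun _ => a
  · rw [if_pos h, if_pos ((dicke_cond_iff a i).mpr h)]
  · rw [if_neg h, if_neg (fun hall => h ((dicke_cond_iff a i).mp hall))]

end NQV

/-- Theorem 4: the `n`-qudit Hilbert space decomposes as the orthogonal direct sum
`span{|a…a⟩ : a} ⊕ GES_{m−d} ⊕ CES_{d^n − m}`. -/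
theorem nqudit_veronese_decomposition (n d : ℕ) (hn : 2 ≤ n) (hd : 2 ≤ d)
    (m : ℕ) (hm : m = Nat.choose (n + d - 1) (d - 1))
    (W : Submodule ℂ (EuclideanSpace ℂ (Fin n → Fin d)))
    (hW : W = Submodule.span ℂ
        {v | ∃ k : Fin d → ℕ, (∑ a, k a) = n ∧ v = genDicke n d k})
    (A : Submodule ℂ (EuclideanSpace ℂ (Fin n → Fin d)))
    (hA : A = Submodule.span ℂ
        (Set.range fun a : Fin d => EuclideanSpace.single (fun _ => a) (1 : ℂ)))
    (B : Submodule ℂ (EuclideanSpace ℂ (Fin n → Fin d)))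
    (hB : B = Submodule.span ℂ
        {v | ∃ k : Fin d → ℕ, (∑ a, k a) = n ∧ (∀ a, k a < n) ∧ v = genDicke n d k}) :
    Submodule.IsOrtho A B ∧ Submodule.IsOrtho A Wᗮ ∧ Submodule.IsOrtho B Wᗮ ∧
    A ⊔ B ⊔ Wᗮ = ⊤ ∧
    Module.finrank ℂ ↥B = m - d ∧
    (∀ ψ ∈ B, ψ ≠ 0 → GME ψ) ∧
    Module.finrank ℂ ↥(Wᗮ) = d ^ n - m ∧
    (∀ ψ ∈ Wᗮ, FullyProduct ψ → ψ = 0) := by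
  classical
  open NQV in
  have hn0 : 0 < n := by omega
  have hAW : A ≤ W := by
    rw [hA, hW]
    apply Submodule.span_mono
    rintro v ⟨a, rfl⟩
    exact ⟨fun b => if b = a then n else 0, by simp, dicke_single a⟩
  have hBW : B ≤ W := by
    rw [hB, hW]
    apply Submodule.span_mono
    rintro v ⟨k, h1, h2, h3⟩
    exact ⟨k, h1, h3⟩
  have hsymmB : ∀ ψ ∈ B, ∀ σ : Equiv.Perm (Fin n), ∀ i, ψ (fun j => i (σ j)) = ψ i := by
    intro ψ hψ
    rw [hB] at hψ
    refine Submodule.span_induction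
      (p := fun x _ => ∀ σ : Equiv.Perm (Fin n), ∀ i, x (fun j => i (σ j)) = x i)
      ?_ ?_ ?_ ?_ hψ
    · rintro v ⟨k, -, -, rfl⟩ σ i
      rw [genDicke_apply, genDicke_apply]
      simp only [cnt_perm]
    · intro σ i; rfl
    · intro x y hx hy hpx hpy σ i
      have e : (x + y) (fun j => i (σ j)) = x (fun j => i (σ j)) + y (fun j => i (σ j)) := rfl
      rw [e, hpx σ i, hpy σ i]; rfl
    · intro c x hx hpx σ i
      have e : (c • x) (fun j => i (σ j)) = c * x (fun j => i (σ j)) := rfl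
      rw [e, hpx σ i]; rfl
  have hvanB : ∀ ψ ∈ B, ∀ a : Fin d, ψ (fun _ => a) = 0 := by
    intro ψ hψ
    rw [hB] at hψ
    refine Submodule.span_induction
      (p := fun x _ => ∀ a : Fin d, x (fun _ => a) = 0) ?_ ?_ ?_ ?_ hψ
    · rintro v ⟨k, -, hlt, rfl⟩ a
      rw [genDicke_apply, if_neg]
      intro hall
      have h2 := hall a
      rw [cnt_const, if_pos rfl] at h2
      have := hlt a
      omega
    · intro a; rfl
    · intro x y hx hy hpx hpy a
      have e : (x + y) (fun _ : Fin n => a) = x (fun _ => a) + y (fun _ => a) := rfl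
      rw [e, hpx a, hpy a, add_zero]
    · intro c x hx hpx a
      have e : (c • x) (fun _ : Fin n => a) = c * x (fun _ => a) := rfl
      rw [e, hpx a, mul_zero]
  have hsB : {v | ∃ k : Fin d → ℕ, (∑ a, k a) = n ∧ (∀ a, k a < n) ∧ v = genDicke n d k}
      = Set.range (fun k : ↥(FB n d) => genDicke n d (k : Fin d → ℕ)) := by
    ext v
    constructor
    · rintro ⟨k, h1, h2, rfl⟩
      exact ⟨⟨k, mem_FB.mpr ⟨h1, h2⟩⟩, rfl⟩
    · rintro ⟨⟨k, hk⟩, rfl⟩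
      rcases mem_FB.mp hk with ⟨h1, h2⟩
      exact ⟨k, h1, h2, rfl⟩
  have hsW : {v | ∃ k : Fin d → ℕ, (∑ a, k a) = n ∧ v = genDicke n d k}
      = Set.range (fun k : ↥(FW n d) => genDicke n d (k : Fin d → ℕ)) := by
    ext v
    constructor
    · rintro ⟨k, h1, rfl⟩
      exact ⟨⟨k, mem_FW.mpr h1⟩, rfl⟩
    · rintro ⟨⟨k, hk⟩, rfl⟩
      exact ⟨k, mem_FW.mp hk, rfl⟩
  have hrB : Module.finrank ℂ ↥B = m - d := by
    rw [hB, hsB, finrank_span_dicke (FB n d) (fun k hk => (mem_FB.mp hk).1),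
      card_FB (by omega) (by omega), card_FW (by omega), hm]
  have hrW : Module.finrank ℂ ↥W = m := by
    rw [hW, hsW, finrank_span_dicke (FW n d) (fun k hk => mem_FW.mp hk),
      card_FW (by omega), hm]
  have hrE : Module.finrank ℂ (EuclideanSpace ℂ (Fin n → Fin d)) = d ^ n := by
    rw [finrank_euclideanSpace]
    simp
  have hrWp : Module.finrank ℂ ↥(Wᗮ) = d ^ n - m := by
    have hh := Submodule.finrank_add_finrank_orthogonal (K := W)
    rw [hrW, hrE] at hh
    omega
  have hoAB : Submodule.IsOrtho A B := by
    rw [hA, hB, Submodule.isOrtho_span]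
    rintro u ⟨a, rfl⟩ v ⟨k, h1, h2, rfl⟩
    rw [EuclideanSpace.inner_single_left, map_one, one_mul, genDicke_apply, if_neg]
    intro hall
    have h3 := hall a
    rw [cnt_const, if_pos rfl] at h3
    have := h2 a
    omega
  have hABW : A ⊔ B = W := by
    rw [hA, hB, hW, ← Submodule.span_union]
    congr 1
    ext v
    simp only [Set.mem_union, Set.mem_setOf_eq, Set.mem_range]
    constructor
    · rintro (⟨a, rfl⟩ | ⟨k, h1, h2, rfl⟩)
      · exact ⟨fun b => if b = a then n else 0, by simp, dicke_single a⟩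
      · exact ⟨k, h1, rfl⟩
    · rintro ⟨k, h1, rfl⟩
      by_cases hall : ∀ a, k a < n
      · exact Or.inr ⟨k, h1, hall, rfl⟩
      · left
        push_neg at hall
        obtain ⟨a, ha⟩ := hall
        have hle : k a ≤ n :=
          h1 ▸ Finset.single_le_sum (fun b _ => Nat.zero_le _) (Finset.mem_univ a)
        have hka : k a = n := le_antisymm hle ha
        have hk : k = fun b => if b = a then n else 0 := by
          funext b
          rcases eq_or_ne b a with rfl | hb
          · simp [hka]
          · have hz : ∑ x ∈ Finset.univ.erase a, k x = 0 := by
              have h4 := Finset.add_sum_erase Finset.univ k (Finset.mem_univ a)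
              omega
            have hb0 := Finset.sum_eq_zero_iff.mp hz b
              (Finset.mem_erase.mpr ⟨hb, Finset.mem_univ b⟩)
            simp [hb, hb0]
        rw [hk]
        exact ⟨a, dicke_single a⟩
  have htop : A ⊔ B ⊔ Wᗮ = ⊤ := by
    rw [hABW]
    exact Submodule.sup_orthogonal_of_hasOrthogonalProjection
  have hGME : ∀ ψ ∈ B, ψ ≠ 0 → GME ψ := by
    intro ψ hψ hne
    exact ⟨hne, fun S hS1 hS2 => not_bisep (hsymmB ψ hψ) (hvanB ψ hψ) hne hS1 hS2⟩
  have hprod : ∀ ψ ∈ Wᗮ, FullyProduct ψ → ψ = 0 := by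
    intro ψ hψ hfp
    apply product_orth_zero ψ _ hfp
    intro k hk
    have hmem : genDicke n d k ∈ W := by
      rw [hW]
      exact Submodule.subset_span ⟨k, hk, rfl⟩
    have h0 := (Submodule.mem_orthogonal W ψ).mp hψ _ hmem
    rw [inner_dicke] at h0
    exact h0
  exact ⟨hoAB, (W.isOrtho_orthogonal_right).mono_left hAW,
    (W.isOrtho_orthogonal_right).mono_left hBW, htop, hrB, hGME, hrWp, hprod⟩
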